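/- Let η be the power series with coefficients η₀ = 1, η_n = 0 for all odd n, and η_{n+2} = (n-1)/(n+2)² · η_n for all n ≥ 0. Then: η ∈ X_r for all r > 0; η_n < 0 for all even n ≥ 2; for all 0 < r₁ < r₂ the kernel of L : X_{r₂} → X_{r₁} equals {c η : c ∈ ℝ}; the function J := 1 - η = Σ_{n≥2} |η_n| xⁿ satisfies L J(x) = 1 for all x > 0, J(0) = J'(0) = 0, J''(0) = 1/2, all derivatives J^{(k)}(x) > 0 for all x > 0 and all k ≥ 0, and ‖J‖_r ≤ (1/2) r e^{r²/2} for every r > 0. -/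

import Mathlib

open Set

/-- The `X_r` norm of a coefficient sequence: `‖f‖_r = Σ_n |f_n| ⟨n⟩ r^{n-1}`,
where `⟨n⟩ = max{1, n}`. -/
noncomputable def Xnorm (r : ℝ) (f : ℕ → ℝ) : ℝ :=
  ∑' n : ℕ, |f n| * max 1 (n : ℝ) * r ^ ((n : ℤ) - 1)

/-- Membership in `X_r`: the coefficient sequence is even (vanishes on odd indices)
and has finite `X_r` norm. -/
def MemX (r : ℝ) (f : ℕ → ℝ) : Prop :=
  (∀ n, Odd n → f n = 0) ∧
  Summable (fun n : ℕ => |f n| * max 1 (n : ℝ) * r ^ ((n : ℤ) - 1))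

/-- Action of the operator `L h = h'' + h'(1/x - x) + h` on coefficient sequences:
the `n`-th coefficient of `L f` is `(n+2)² f_{n+2} - (n-1) f_n`. -/
def Lcoef (f : ℕ → ℝ) (n : ℕ) : ℝ :=
  ((n : ℝ) + 2) ^ 2 * f (n + 2) - ((n : ℝ) - 1) * f n

/-- The sequence `η`: `η₀ = 1`, `η_n = 0` for odd `n`, `η_{n+2} = (n-1)/(n+2)² η_n`. -/
noncomputable def eta : ℕ → ℝ
  | 0 => 1
  | 1 => 0
  | n + 2 => ((n : ℝ) - 1) / ((n : ℝ) + 2) ^ 2 * eta n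

/-- Coefficients of `J := 1 - η`. -/
noncomputable def Jcoef (n : ℕ) : ℝ := (if n = 0 then 1 else 0) - eta n

/-- The function `J(x) = Σ_n J_n xⁿ`. -/
noncomputable def Jfun (x : ℝ) : ℝ := ∑' n : ℕ, Jcoef n * x ^ n

/-! ### Auxiliary lemmas -/

lemma eta_zero : eta 0 = 1 := rfl
lemma eta_one : eta 1 = 0 := rfl
lemma eta_rec (n : ℕ) : eta (n + 2) = ((n : ℝ) - 1) / ((n : ℝ) + 2) ^ 2 * eta n := rfl

lemma eta_odd_k : ∀ k : ℕ, eta (2 * k + 1) = 0 := by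
  intro k
  induction k with
  | zero => rfl
  | succ k ih =>
      have h : 2 * (k + 1) + 1 = (2 * k + 1) + 2 := by ring
      rw [h, eta_rec, ih, mul_zero]

lemma eta_odd {n : ℕ} (hn : Odd n) : eta n = 0 := by
  obtain ⟨k, hk⟩ := hn
  have : n = 2 * k + 1 := by omega
  rw [this, eta_odd_k]

lemma eta_two : eta 2 = -(1/4) := by
  have h := eta_rec 0
  norm_num [eta_zero] at h
  convert h using 2 <;> norm_num

lemma eta_neg_k : ∀ k : ℕ, eta (2 * k + 2) < 0 := by
  intro k
  induction k with
  | zero => rw [show 2 * 0 + 2 = 2 by norm_num, eta_two]; norm_num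
  | succ k ih =>
      have h : 2 * (k + 1) + 2 = (2 * k + 2) + 2 := by ring
      rw [h, eta_rec]
      have hpos : 0 < ((2 * k + 2 : ℕ) : ℝ) - 1 := by push_cast; linarith
      have hden : (0:ℝ) < (((2 * k + 2 : ℕ) : ℝ) + 2) ^ 2 := by positivity
      exact mul_neg_of_pos_of_neg (div_pos hpos hden) ih

lemma eta_neg {n : ℕ} (he : Even n) (h2 : 2 ≤ n) : eta n < 0 := by
  obtain ⟨m, hm⟩ := he
  have hm1 : 1 ≤ m := by omega
  have : n = 2 * (m - 1) + 2 := by omega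
  rw [this]; exact eta_neg_k (m - 1)

/-- Key coefficient bound: `|η_{2k+2}| (k+1)! 2^{k+2} ≤ 1`. -/
lemma eta_bd : ∀ k : ℕ, |eta (2 * k + 2)| * ((k + 1).factorial : ℝ) * 2 ^ (k + 2) ≤ 1 := by
  intro k
  induction k with
  | zero =>
      rw [show 2 * 0 + 2 = 2 by norm_num, eta_two]
      simp only [abs_neg]
      rw [abs_of_nonneg (by norm_num : (0:ℝ) ≤ 1/4)]
      norm_num
  | succ k ih =>
      have h : 2 * (k + 1) + 2 = (2 * k + 2) + 2 := by ring
      rw [h, eta_rec, abs_mul]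
      have hnum : |((2 * k + 2 : ℕ) : ℝ) - 1| = 2 * (k:ℝ) + 1 := by
        rw [abs_of_nonneg (by push_cast; linarith)]; push_cast; ring
      have hden : (((2 * k + 2 : ℕ) : ℝ) + 2) ^ 2 = (2 * (k:ℝ) + 4) ^ 2 := by push_cast; ring
      rw [abs_div, hnum, abs_of_nonneg (by positivity : (0:ℝ) ≤ (((2 * k + 2 : ℕ) : ℝ) + 2) ^ 2), hden]
      have hfac : ((k + 1 + 1).factorial : ℝ) = ((k:ℝ) + 2) * ((k + 1).factorial : ℝ) := by
        rw [Nat.factorial_succ]; push_cast; ring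
      rw [hfac]
      have hd : (0:ℝ) < (2 * (k:ℝ) + 4) ^ 2 := by positivity
      have he : (0:ℝ) ≤ |eta (2 * k + 2)| := abs_nonneg _
      have key : (2 * (k:ℝ) + 1) / (2 * (k:ℝ) + 4) ^ 2 * (((k:ℝ) + 2) * 2) ≤ 1 := by
        rw [div_mul_eq_mul_div, div_le_one hd]; nlinarith
      calc (2 * (k:ℝ) + 1) / (2 * (k:ℝ) + 4) ^ 2 * |eta (2 * k + 2)| *
              (((k:ℝ) + 2) * ((k + 1).factorial : ℝ)) * 2 ^ (k + 1 + 2)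
          = (|eta (2 * k + 2)| * ((k + 1).factorial : ℝ) * 2 ^ (k + 2)) *
              ((2 * (k:ℝ) + 1) / (2 * (k:ℝ) + 4) ^ 2 * (((k:ℝ) + 2) * 2)) := by ring
        _ ≤ 1 * 1 := by
            apply mul_le_mul ih key (by positivity)
            positivity
        _ = 1 := by norm_num

lemma eta_abs_le (k : ℕ) :
    |eta (2 * k + 2)| ≤ 1 / (((k + 1).factorial : ℝ) * 2 ^ (k + 2)) := by
  have h := eta_bd k
  have hp : (0:ℝ) < ((k + 1).factorial : ℝ) * 2 ^ (k + 2) := by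
    have : (0:ℝ) < ((k + 1).factorial : ℝ) := by exact_mod_cast (k+1).factorial_pos
    positivity
  rw [le_div_iff₀ hp]
  calc |eta (2 * k + 2)| * (((k + 1).factorial : ℝ) * 2 ^ (k + 2))
      = |eta (2 * k + 2)| * ((k + 1).factorial : ℝ) * 2 ^ (k + 2) := by ring
    _ ≤ 1 := h

lemma abs_Jcoef_le (n : ℕ) : |Jcoef n| ≤ |eta n| := by
  cases n with
  | zero => simp [Jcoef, eta_zero]
  | succ m => simp [Jcoef]

/-- The general term bound for the `X_r` norm, for any sequence dominated by `η`. -/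
lemma term_bound {r : ℝ} (hr : 0 < r) {a : ℕ → ℝ} (hb : ∀ n, |a n| ≤ |eta n|) (k : ℕ) :
    |a (2 * k + 2)| * max 1 ((2 * k + 2 : ℕ) : ℝ) * r ^ (((2 * k + 2 : ℕ) : ℤ) - 1)
      ≤ (r / 2) * ((r ^ 2 / 2) ^ k / (k.factorial : ℝ)) := by
  have hexp : ((2 * k + 2 : ℕ) : ℤ) - 1 = ((2 * k + 1 : ℕ) : ℤ) := by push_cast; ring
  rw [hexp, zpow_natCast]
  have hmax : max 1 ((2 * k + 2 : ℕ) : ℝ) = ((2 * k + 2 : ℕ) : ℝ) := by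
    apply max_eq_right; push_cast; linarith
  rw [hmax]
  have h1 : |a (2 * k + 2)| ≤ 1 / (((k + 1).factorial : ℝ) * 2 ^ (k + 2)) :=
    (hb _).trans (eta_abs_le k)
  have hfp : (0:ℝ) < ((k + 1).factorial : ℝ) := by exact_mod_cast (k+1).factorial_pos
  have hfp' : (0:ℝ) < (k.factorial : ℝ) := by exact_mod_cast k.factorial_pos
  calc |a (2 * k + 2)| * ((2 * k + 2 : ℕ) : ℝ) * r ^ (2 * k + 1)
      ≤ 1 / (((k + 1).factorial : ℝ) * 2 ^ (k + 2)) * ((2 * k + 2 : ℕ) : ℝ) * r ^ (2 * k + 1) := by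
        gcongr
    _ = (r / 2) * ((r ^ 2 / 2) ^ k / (k.factorial : ℝ)) := by
        have hfac : ((k + 1).factorial : ℝ) = ((k:ℝ) + 1) * (k.factorial : ℝ) := by
          rw [Nat.factorial_succ]; push_cast; ring
        have hpow : r ^ (2 * k + 1) = (r ^ 2) ^ k * r := by
          rw [← pow_mul, ← pow_succ]
        have hpow2 : (r ^ 2 / 2) ^ k = (r ^ 2) ^ k / 2 ^ k := by
          rw [div_pow]
        rw [hfac, hpow, hpow2]
        push_cast
        field_simp
        ring

/-! ### Membership in X_r -/

lemma memX_term_nonneg {r : ℝ} (hr : 0 < r) (a : ℕ → ℝ) (n : ℕ) :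
    0 ≤ |a n| * max 1 (n : ℝ) * r ^ ((n : ℤ) - 1) := by
  have h1 : (0:ℝ) ≤ max 1 (n:ℝ) := le_trans zero_le_one (le_max_left _ _)
  have h2 : (0:ℝ) < r ^ ((n : ℤ) - 1) := zpow_pos hr _
  positivity

lemma memX_summable {r : ℝ} (hr : 0 < r) {a : ℕ → ℝ}
    (hodd : ∀ n, Odd n → a n = 0) (hb : ∀ n, |a n| ≤ |eta n|) :
    Summable (fun n : ℕ => |a n| * max 1 (n : ℝ) * r ^ ((n : ℤ) - 1)) := by
  set f : ℕ → ℝ := fun n => |a n| * max 1 (n : ℝ) * r ^ ((n : ℤ) - 1) with hf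
  have hinj : Function.Injective (fun k : ℕ => 2 * k) := fun x y h => by dsimp at h; omega
  have hvan : ∀ n, n ∉ Set.range (fun k : ℕ => 2 * k) → f n = 0 := by
    intro n hn
    rcases Nat.even_or_odd n with he | ho
    · exfalso; obtain ⟨m, hm⟩ := he; exact hn ⟨m, by dsimp; omega⟩
    · simp [hf, hodd n ho]
  rw [← hinj.summable_iff hvan]
  apply (summable_nat_add_iff 1).mp
  have hcomp : Summable (fun k : ℕ => (r / 2) * ((r ^ 2 / 2) ^ k / (k.factorial : ℝ))) :=
    (Real.summable_pow_div_factorial (r ^ 2 / 2)).mul_left (r / 2)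
  apply Summable.of_nonneg_of_le _ _ hcomp
  · intro k
    exact memX_term_nonneg hr a _
  · intro k
    have h : 2 * (k + 1) = 2 * k + 2 := by ring
    show f (2 * (k + 1)) ≤ _
    rw [h]
    exact term_bound hr hb k

lemma memX_eta {r : ℝ} (hr : 0 < r) : MemX r eta :=
  ⟨fun _ h => eta_odd h, memX_summable hr (fun _ h => eta_odd h) (fun _ => le_refl _)⟩

lemma Jcoef_odd {n : ℕ} (hn : Odd n) : Jcoef n = 0 := by
  have h0 : n ≠ 0 := by rintro rfl; exact (Nat.not_odd_iff_even.mpr Even.zero) hn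
  simp [Jcoef, h0, eta_odd hn]

lemma memX_J {r : ℝ} (hr : 0 < r) : MemX r Jcoef :=
  ⟨fun _ h => Jcoef_odd h, memX_summable hr (fun _ h => Jcoef_odd h) abs_Jcoef_le⟩

lemma Jcoef_eq_neg_eta {n : ℕ} (hn : n ≠ 0) : Jcoef n = -eta n := by
  simp [Jcoef, hn]

lemma Jcoef_nonneg (n : ℕ) : 0 ≤ Jcoef n := by
  rcases Nat.eq_zero_or_pos n with rfl | hpos
  · simp [Jcoef, eta_zero]
  · rw [Jcoef_eq_neg_eta (by omega)]
    rcases Nat.even_or_odd n with he | ho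
    · have h2 : 2 ≤ n := by obtain ⟨m, hm⟩ := he; omega
      linarith [eta_neg he h2]
    · rw [eta_odd ho]; norm_num

lemma Jcoef_pos {n : ℕ} (he : Even n) (h2 : 2 ≤ n) : 0 < Jcoef n := by
  rw [Jcoef_eq_neg_eta (by omega)]
  linarith [eta_neg he h2]

/-! ### Power series machinery -/

noncomputable def Sfun (a : ℕ → ℝ) (x : ℝ) : ℝ := ∑' n : ℕ, a n * x ^ n

def sh (a : ℕ → ℝ) (n : ℕ) : ℝ := ((n : ℝ) + 1) * a (n + 1)

def AllSum (a : ℕ → ℝ) : Prop := ∀ R : ℝ, 0 < R → Summable (fun n : ℕ => |a n| * R ^ n)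

lemma AllSum.of_le {a b : ℕ → ℝ} (hb : AllSum b) (hab : ∀ n, |a n| ≤ |b n|) : AllSum a := by
  intro R hR
  apply Summable.of_nonneg_of_le
    (fun n => mul_nonneg (abs_nonneg _) (pow_nonneg hR.le _)) _ (hb R hR)
  intro n
  exact mul_le_mul_of_nonneg_right (hab n) (pow_nonneg hR.le _)

lemma allSum_eta : AllSum eta := by
  intro R hR
  have hinj : Function.Injective (fun k : ℕ => 2 * k) := fun x y h => by dsimp at h; omega
  have hvan : ∀ n, n ∉ Set.range (fun k : ℕ => 2 * k) →
      |eta n| * R ^ n = 0 := by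
    intro n hn
    rcases Nat.even_or_odd n with he | ho
    · exfalso; obtain ⟨m, hm⟩ := he; exact hn ⟨m, by dsimp; omega⟩
    · simp [eta_odd ho]
  rw [← hinj.summable_iff hvan]
  apply (summable_nat_add_iff 1).mp
  have hcomp : Summable (fun k : ℕ => (1/2 : ℝ) * ((R ^ 2 / 2) ^ (k+1) / ((k+1).factorial : ℝ))) :=
    (((summable_nat_add_iff 1).mpr (Real.summable_pow_div_factorial (R ^ 2 / 2)))).mul_left (1/2)
  apply Summable.of_nonneg_of_le
    (fun k => mul_nonneg (abs_nonneg _) (pow_nonneg hR.le _)) _ hcomp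
  intro k
  show |eta (2 * (k+1))| * R ^ (2 * (k+1)) ≤ _
  have h : 2 * (k + 1) = 2 * k + 2 := by ring
  rw [h]
  have h1 := eta_abs_le k
  have hfp : (0:ℝ) < ((k + 1).factorial : ℝ) := by exact_mod_cast (k+1).factorial_pos
  calc |eta (2*k+2)| * R ^ (2*k+2)
      ≤ 1 / (((k + 1).factorial : ℝ) * 2 ^ (k + 2)) * R ^ (2*k+2) := by gcongr
    _ = (1/2 : ℝ) * ((R ^ 2 / 2) ^ (k+1) / ((k+1).factorial : ℝ)) := by
        rw [div_pow, show (R^2)^(k+1) = R^(2*k+2) by rw [← pow_mul]; ring_nf]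
        field_simp
        ring

lemma allSum_J : AllSum Jcoef := allSum_eta.of_le abs_Jcoef_le

set_option maxHeartbeats 1000000 in
lemma AllSum.shift {a : ℕ → ℝ} (ha : AllSum a) : AllSum (sh a) := by
  intro R hR
  have h2R : (0:ℝ) < 2 * R := by linarith
  have hcomp : Summable (fun n : ℕ => (|a (n+1)| * (2*R) ^ (n+1)) * R⁻¹) :=
    ((summable_nat_add_iff 1).mpr (ha (2*R) h2R)).mul_right R⁻¹
  apply Summable.of_nonneg_of_le
    (fun n => mul_nonneg (abs_nonneg _) (pow_nonneg hR.le _)) _ hcomp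
  intro n
  have hle : ((n:ℝ) + 1) ≤ 2 ^ (n+1) := by
    have := Nat.lt_two_pow_self (n := n+1)
    exact_mod_cast this.le
  have : |sh a n| = ((n:ℝ)+1) * |a (n+1)| := by
    rw [sh, abs_mul, abs_of_nonneg (by positivity : (0:ℝ) ≤ (n:ℝ)+1)]
  rw [this]
  calc ((n:ℝ)+1) * |a (n+1)| * R ^ n ≤ 2 ^ (n+1) * |a (n+1)| * R ^ n := by gcongr
    _ = (|a (n+1)| * (2*R) ^ (n+1)) * R⁻¹ := by
        rw [mul_pow]
        field_simp
        ring

lemma AllSum.summable_mul_pow {a : ℕ → ℝ} (ha : AllSum a) (x : ℝ) :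
    Summable (fun n : ℕ => a n * x ^ n) := by
  apply Summable.of_abs
  apply Summable.of_nonneg_of_le (fun n => abs_nonneg _) _ (ha (|x| + 1) (by positivity))
  intro n
  rw [abs_mul, abs_pow]
  exact mul_le_mul_of_nonneg_left
    (pow_le_pow_left₀ (abs_nonneg x) (by linarith) n) (abs_nonneg _)

lemma Sfun_hasDerivAt {a : ℕ → ℝ} (ha : AllSum a) (x : ℝ) :
    HasDerivAt (Sfun a) (Sfun (sh a) x) x := by
  set R : ℝ := |x| + 1 with hRdef
  have hR : 0 < R := by positivity
  have hxR : |x| < R := by rw [hRdef]; linarith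
  set u : ℕ → ℝ := fun n => (n : ℝ) * |a n| * R ^ (n - 1) with hu
  have husum : Summable u := by
    apply (summable_nat_add_iff 1).mp
    have : Summable (fun m : ℕ => |sh a m| * R ^ m) := ha.shift R hR
    apply this.congr
    intro m
    rw [hu, sh]
    simp only [Nat.add_sub_cancel]
    rw [abs_mul, abs_of_nonneg (by positivity : (0:ℝ) ≤ (m:ℝ)+1)]
    push_cast
    ring
  have hder : ∀ n : ℕ, ∀ y : ℝ, y ∈ Set.Ioo (-R) R →
      HasDerivAt (fun z : ℝ => a n * z ^ n) (a n * ((n:ℝ) * y ^ (n-1))) y :=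
    fun n y _ => (hasDerivAt_pow n y).const_mul (a n)
  have hbound : ∀ n : ℕ, ∀ y : ℝ, y ∈ Set.Ioo (-R) R →
      ‖a n * ((n:ℝ) * y ^ (n-1))‖ ≤ u n := by
    intro n y hy
    have hyR : |y| ≤ R := (abs_lt.mpr ⟨hy.1, hy.2⟩).le
    rw [Real.norm_eq_abs, abs_mul, abs_mul, abs_pow,
      abs_of_nonneg (by positivity : (0:ℝ) ≤ (n:ℝ))]
    calc |a n| * ((n:ℝ) * |y| ^ (n-1)) ≤ |a n| * ((n:ℝ) * R ^ (n-1)) := by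
          gcongr
      _ = u n := by rw [hu]; ring
  have hx : x ∈ Set.Ioo (-R) R := by
    constructor
    · cases abs_lt.mp hxR; linarith
    · cases abs_lt.mp hxR; linarith
  have h0 : Summable fun n : ℕ => a n * x ^ n := ha.summable_mul_pow x
  have main := hasDerivAt_tsum_of_isPreconnected husum isOpen_Ioo
    (convex_Ioo (-R) R).isPreconnected hder hbound hx h0 hx
  have heq : ∑' n : ℕ, a n * ((n:ℝ) * x ^ (n-1)) = Sfun (sh a) x := by
    have hs : Summable (fun n : ℕ => a n * ((n:ℝ) * x ^ (n-1))) := by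
      apply Summable.of_abs
      apply Summable.of_nonneg_of_le (fun n => abs_nonneg _) _ husum
      intro n
      have := hbound n x hx
      rwa [Real.norm_eq_abs] at this
    rw [Summable.tsum_eq_zero_add hs]
    simp only [Nat.cast_zero, zero_mul, mul_zero, zero_add]
    rw [Sfun]
    apply tsum_congr
    intro n
    rw [sh]
    simp only [Nat.add_sub_cancel]
    push_cast
    ring
  rw [← heq]
  exact main

lemma Sfun_deriv {a : ℕ → ℝ} (ha : AllSum a) : deriv (Sfun a) = Sfun (sh a) :=
  funext fun x => (Sfun_hasDerivAt ha x).deriv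

lemma Sfun_zero (a : ℕ → ℝ) : Sfun a 0 = a 0 := by
  rw [Sfun, tsum_eq_single 0]
  · norm_num
  · intro b hb
    rw [zero_pow hb, mul_zero]

lemma Jfun_eq_Sfun : Jfun = Sfun Jcoef := rfl

lemma allSum_iter : ∀ k : ℕ, AllSum (sh^[k] Jcoef) := by
  intro k
  induction k with
  | zero => exact allSum_J
  | succ k ih => rw [Function.iterate_succ_apply']; exact ih.shift

lemma iteratedDeriv_Jfun (k : ℕ) : iteratedDeriv k Jfun = Sfun (sh^[k] Jcoef) := by
  induction k with
  | zero => rw [iteratedDeriv_zero]; exact Jfun_eq_Sfun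
  | succ k ih =>
      rw [iteratedDeriv_succ, ih, Function.iterate_succ_apply']
      exact Sfun_deriv (allSum_iter k)

lemma sh_iter_nonneg {a : ℕ → ℝ} (ha : ∀ n, 0 ≤ a n) : ∀ k n, 0 ≤ sh^[k] a n := by
  intro k
  induction k with
  | zero => exact ha
  | succ k ih =>
      intro n
      rw [Function.iterate_succ_apply', sh]
      exact mul_nonneg (by positivity) (ih (n+1))

lemma sh_iter_pos {a : ℕ → ℝ} (ha : ∀ n, 0 ≤ a n) :
    ∀ k n, 0 < a (n + k) → 0 < sh^[k] a n := by
  intro k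
  induction k with
  | zero => intro n h; simpa using h
  | succ k ih =>
      intro n h
      rw [Function.iterate_succ_apply', sh]
      apply mul_pos (by positivity)
      exact ih (n+1) (by rwa [show n + 1 + k = n + (k+1) by ring])

/-! ### Lcoef identities -/

lemma Lcoef_eta (n : ℕ) : Lcoef eta n = 0 := by
  rw [Lcoef, eta_rec]
  have h2 : (((n:ℝ)) + 2) ^ 2 ≠ 0 := by positivity
  field_simp
  ring

lemma Lcoef_J (n : ℕ) : Lcoef Jcoef n = if n = 0 then 1 else 0 := by
  by_cases hn : n = 0
  · subst hn
    simp only [Lcoef, Jcoef, if_pos rfl]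
    norm_num [eta_two, eta_zero]
  · rw [if_neg hn]
    have h := Lcoef_eta n
    rw [Lcoef] at h
    rw [Lcoef, Jcoef_eq_neg_eta (by omega), Jcoef_eq_neg_eta hn]
    linear_combination -h

/-! ### The ODE -/

set_option maxHeartbeats 1000000 in
lemma LJ_eq_one {x : ℝ} (hx : 0 < x) :
    deriv (deriv Jfun) x + deriv Jfun x * (1 / x - x) + Jfun x = 1 := by
  have hxne : x ≠ 0 := hx.ne'
  set a1 : ℕ → ℝ := sh Jcoef with ha1def
  set a2 : ℕ → ℝ := sh a1 with ha2def
  have hA1 : AllSum a1 := allSum_J.shift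
  have hA2 : AllSum a2 := hA1.shift
  have hd1 : deriv Jfun = Sfun a1 := by rw [Jfun_eq_Sfun]; exact Sfun_deriv allSum_J
  have hd2 : deriv (deriv Jfun) = Sfun a2 := by rw [hd1]; exact Sfun_deriv hA1
  have s0 : Summable fun n : ℕ => Jcoef n * x ^ n := allSum_J.summable_mul_pow x
  have s1 : Summable fun n : ℕ => a1 n * x ^ n := hA1.summable_mul_pow x
  have s2 : Summable fun n : ℕ => a2 n * x ^ n := hA2.summable_mul_pow x
  have s1' : Summable fun n : ℕ => a1 (n + 1) * x ^ n := by
    apply Summable.of_abs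
    have hcomp : Summable fun n : ℕ => |a1 (n + 1)| * (|x| + 1) ^ (n + 1) :=
      (summable_nat_add_iff 1).mpr (hA1 (|x| + 1) (by positivity))
    apply Summable.of_nonneg_of_le (fun n => abs_nonneg _) _ hcomp
    intro n
    rw [abs_mul, abs_pow]
    have hb1 : |x| ^ n ≤ (|x| + 1) ^ n :=
      pow_le_pow_left₀ (abs_nonneg x) (by linarith) n
    have hb2 : (|x| + 1) ^ n ≤ (|x| + 1) ^ (n + 1) :=
      pow_le_pow_right₀ (by linarith [abs_nonneg x]) (by omega)
    exact mul_le_mul_of_nonneg_left (hb1.trans hb2) (abs_nonneg _)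
  have sA : Summable fun n : ℕ => (n : ℝ) * Jcoef n * x ^ n := by
    apply (summable_nat_add_iff 1).mp
    apply (s1.mul_right x).congr
    intro n
    simp only [ha1def, sh]
    push_cast
    ring
  have h10 : a1 0 = 0 := by simp [ha1def, sh, Jcoef, eta_one]
  have e1' : Sfun a1 x = (∑' n : ℕ, a1 (n + 1) * x ^ n) * x := by
    rw [Sfun, Summable.tsum_eq_zero_add s1, h10, zero_mul, zero_add, ← tsum_mul_right]
    exact tsum_congr fun n => by rw [pow_succ]; ring
  have e1 : Sfun a1 x * (1 / x) = ∑' n : ℕ, a1 (n + 1) * x ^ n := by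
    rw [e1']; field_simp
  have e2 : Sfun a1 x * x = ∑' n : ℕ, (n : ℝ) * Jcoef n * x ^ n := by
    rw [Summable.tsum_eq_zero_add sA]
    simp only [Nat.cast_zero, zero_mul, zero_add]
    rw [Sfun, ← tsum_mul_right]
    exact tsum_congr fun n => by simp only [ha1def, sh]; push_cast; ring
  have hone : ∑' n : ℕ, (if n = 0 then (1 : ℝ) else 0) * x ^ n = 1 := by
    rw [tsum_eq_single 0]
    · norm_num
    · intro b hb; simp [hb]
  have key : Sfun a2 x + (Sfun a1 x * (1 / x) - Sfun a1 x * x) + Sfun Jcoef x = 1 := by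
    rw [e1, e2,
      show Sfun a2 x = ∑' n : ℕ, a2 n * x ^ n from rfl,
      show Sfun Jcoef x = ∑' n : ℕ, Jcoef n * x ^ n from rfl,
      ← Summable.tsum_sub s1' sA, ← Summable.tsum_add s2 (s1'.sub sA), ← Summable.tsum_add (s2.add (s1'.sub sA)) s0,
      ← hone]
    apply tsum_congr
    intro n
    rw [← Lcoef_J n]
    simp only [Lcoef, ha2def, ha1def, sh]
    push_cast
    ring
  rw [hd2, hd1, Jfun_eq_Sfun, mul_sub]
  exact key

/-! ### Values at 0 -/

lemma Jfun_zero : Jfun 0 = 0 := by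
  rw [Jfun_eq_Sfun, Sfun_zero]
  simp [Jcoef, eta_zero]

lemma deriv_Jfun_zero : deriv Jfun 0 = 0 := by
  rw [Jfun_eq_Sfun, Sfun_deriv allSum_J, Sfun_zero]
  simp [sh, Jcoef, eta_one]

lemma deriv2_Jfun_zero : deriv (deriv Jfun) 0 = 1 / 2 := by
  rw [Jfun_eq_Sfun, Sfun_deriv allSum_J, Sfun_deriv allSum_J.shift, Sfun_zero]
  simp only [sh, Jcoef]
  norm_num [eta_two]

/-! ### Positivity of iterated derivatives -/

lemma iteratedDeriv_Jfun_pos (k : ℕ) {x : ℝ} (hx : 0 < x) :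
    0 < iteratedDeriv k Jfun x := by
  rw [iteratedDeriv_Jfun k]
  set b : ℕ → ℝ := sh^[k] Jcoef with hb
  have hb0 : ∀ n, 0 ≤ b n := sh_iter_nonneg Jcoef_nonneg k
  set m : ℕ := if Even k then 2 else 1 with hm
  have hmk : Even (m + k) ∧ 2 ≤ m + k := by
    by_cases hk : Even k
    · obtain ⟨j, hj⟩ := hk
      rw [hm, if_pos ⟨j, hj⟩]
      exact ⟨⟨j + 1, by omega⟩, by omega⟩
    · obtain ⟨j, hj⟩ := Nat.not_even_iff_odd.mp hk
      rw [hm, if_neg hk]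
      exact ⟨⟨j + 1, by omega⟩, by omega⟩
  have hpos : 0 < b m := sh_iter_pos Jcoef_nonneg k m (Jcoef_pos hmk.1 hmk.2)
  have hsum : Summable fun n : ℕ => b n * x ^ n := (allSum_iter k).summable_mul_pow x
  have h1 : b m * x ^ m ≤ ∑' n : ℕ, b n * x ^ n :=
    Summable.le_tsum hsum m (fun j _ => mul_nonneg (hb0 j) (pow_nonneg hx.le j))
  have h2 : 0 < b m * x ^ m := mul_pos hpos (pow_pos hx m)
  calc (0:ℝ) < b m * x ^ m := h2
    _ ≤ Sfun b x := h1

/-! ### Norm bound -/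

lemma norm_bound {r : ℝ} (hr : 0 < r) :
    Xnorm r Jcoef ≤ 1 / 2 * r * Real.exp (r ^ 2 / 2) := by
  set f : ℕ → ℝ := fun n => |Jcoef n| * max 1 (n : ℝ) * r ^ ((n : ℤ) - 1) with hf
  have hinj : Function.Injective (fun k : ℕ => 2 * k + 2) := fun x y h => by dsimp at h; omega
  have hvan : ∀ n, n ∉ Set.range (fun k : ℕ => 2 * k + 2) → f n = 0 := by
    intro n hn
    rcases Nat.even_or_odd n with he | ho
    · obtain ⟨m, hm⟩ := he
      by_cases hm0 : m = 0
      · subst hm0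
        have : n = 0 := by omega
        subst this
        simp [hf, Jcoef, eta_zero]
      · exact absurd ⟨m - 1, by dsimp; omega⟩ hn
    · simp [hf, Jcoef_odd ho]
  have hXeq : Xnorm r Jcoef = ∑' k : ℕ, f (2 * k + 2) := by
    rw [Xnorm]
    exact (hinj.tsum_eq fun n hn => by
      by_contra hc
      exact hn (hvan n hc)).symm
  have hsumL : Summable fun k : ℕ => f (2 * k + 2) :=
    (hinj.summable_iff hvan).mpr (memX_J hr).2
  have hsumR : Summable fun k : ℕ => (r / 2) * ((r ^ 2 / 2) ^ k / (k.factorial : ℝ)) :=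
    (Real.summable_pow_div_factorial _).mul_left _
  have hle : ∀ k : ℕ, f (2 * k + 2) ≤ (r / 2) * ((r ^ 2 / 2) ^ k / (k.factorial : ℝ)) :=
    fun k => term_bound hr abs_Jcoef_le k
  have hexp : ∑' k : ℕ, (r / 2) * ((r ^ 2 / 2) ^ k / (k.factorial : ℝ))
      = (r / 2) * Real.exp (r ^ 2 / 2) := by
    rw [tsum_mul_left]
    congr 1
    rw [Real.exp_eq_exp_ℝ, NormedSpace.exp_eq_tsum_div]
  calc Xnorm r Jcoef = ∑' k : ℕ, f (2 * k + 2) := hXeq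
    _ ≤ ∑' k : ℕ, (r / 2) * ((r ^ 2 / 2) ^ k / (k.factorial : ℝ)) :=
        Summable.tsum_le_tsum hle hsumL hsumR
    _ = (r / 2) * Real.exp (r ^ 2 / 2) := hexp
    _ = 1 / 2 * r * Real.exp (r ^ 2 / 2) := by ring

/-! ### Kernel -/

lemma Jcoef_abs {n : ℕ} (h2 : 2 ≤ n) : Jcoef n = |eta n| := by
  rw [Jcoef_eq_neg_eta (by omega)]
  rcases Nat.even_or_odd n with he | ho
  · rw [abs_of_neg (eta_neg he h2)]
  · rw [eta_odd ho]; norm_num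

lemma kernel_eq {r₁ r₂ : ℝ} (h1 : 0 < r₁) (h12 : r₁ < r₂) :
    {f : ℕ → ℝ | MemX r₂ f ∧ ∀ n, Lcoef f n = 0}
      = {f : ℕ → ℝ | ∃ c : ℝ, f = fun n => c * eta n} := by
  have hr2 : 0 < r₂ := h1.trans h12
  ext f
  simp only [Set.mem_setOf_eq]
  constructor
  · rintro ⟨hmem, hL⟩
    refine ⟨f 0, funext fun n => ?_⟩
    have key : ∀ n : ℕ, f n = f 0 * eta n ∧ f (n + 1) = f 0 * eta (n + 1) := by
      intro n
      induction n with
      | zero =>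
          refine ⟨by rw [eta_zero]; ring, ?_⟩
          rw [hmem.1 1 odd_one, eta_one, mul_zero]
      | succ n ih =>
          refine ⟨ih.2, ?_⟩
          have h := hL n
          rw [Lcoef, sub_eq_zero] at h
          have h2 : (((n:ℝ)) + 2) ^ 2 ≠ 0 := by positivity
          have hf2 : f (n + 2) = ((n : ℝ) - 1) / ((n : ℝ) + 2) ^ 2 * f n := by
            field_simp
            linear_combination h
          rw [show n + 1 + 1 = n + 2 from rfl, hf2, ih.1, eta_rec]
          ring
    exact (key n).1
  · rintro ⟨c, rfl⟩
    refine ⟨⟨fun n hn => by show c * eta n = 0; rw [eta_odd hn, mul_zero], ?_⟩, ?_⟩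
    · apply ((memX_eta hr2).2.mul_left |c|).congr
      intro n
      rw [abs_mul]
      ring
    · intro n
      have h := Lcoef_eta n
      rw [Lcoef] at h ⊢
      linear_combination c * h

/-- Properties of `η` and `J = 1 - η`: `η ∈ X_r` for all `r > 0`; `η_n < 0` for even `n ≥ 2`;
the kernel of `L : X_{r₂} → X_{r₁}` is `{cη : c ∈ ℝ}`; `J = Σ_{n≥2} |η_n| xⁿ` satisfies
`L J = 1` on `x > 0`, `J(0) = J'(0) = 0`, `J''(0) = 1/2`, `J^{(k)}(x) > 0` for all `x > 0`
and all `k ≥ 0`, and `‖J‖_r ≤ (1/2) r e^{r²/2}`. -/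
theorem eta_and_J_properties :
    (∀ r : ℝ, 0 < r → MemX r eta) ∧
    (∀ n : ℕ, Even n → 2 ≤ n → eta n < 0) ∧
    (∀ r₁ r₂ : ℝ, 0 < r₁ → r₁ < r₂ →
      {f : ℕ → ℝ | MemX r₂ f ∧ ∀ n, Lcoef f n = 0}
        = {f : ℕ → ℝ | ∃ c : ℝ, f = fun n => c * eta n}) ∧
    (∀ n : ℕ, 2 ≤ n → Jcoef n = |eta n|) ∧
    (∀ r : ℝ, 0 < r → MemX r Jcoef) ∧
    (∀ x : ℝ, 0 < x →
      deriv (deriv Jfun) x + deriv Jfun x * (1 / x - x) + Jfun x = 1) ∧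
    Jfun 0 = 0 ∧ deriv Jfun 0 = 0 ∧ deriv (deriv Jfun) 0 = 1 / 2 ∧
    (∀ k : ℕ, ∀ x : ℝ, 0 < x → 0 < iteratedDeriv k Jfun x) ∧
    (∀ r : ℝ, 0 < r → Xnorm r Jcoef ≤ 1 / 2 * r * Real.exp (r ^ 2 / 2)) := by
  exact ⟨fun r hr => memX_eta hr,
    fun n he h2 => eta_neg he h2,
    fun r₁ r₂ h1 h12 => kernel_eq h1 h12,
    fun n h2 => Jcoef_abs h2,
    fun r hr => memX_J hr,
    fun x hx => LJ_eq_one hx,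
    Jfun_zero, deriv_Jfun_zero, deriv2_Jfun_zero,
    fun k x hx => iteratedDeriv_Jfun_pos k hx,
    fun r hr => norm_bound hr⟩
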